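/- Let C and D be the explicit 6×6 matrices over GF(3) given by: C has 2×2 block form [[O,O,C₀],[O,C₀,O],[C₀,O,O]] with C₀ = [[2,1],[0,1]], and D has rows [1,1,0,0,0,0], [1,0,0,0,0,0], [0,0,0,0,2,2], [0,0,0,0,0,1], [0,1,0,1,0,1], [1,0,1,0,1,0]. Then the matrix P = C·D leaves invariant exactly one 2-dimensional subspace of GF(3)^6 under the row action W ↦ {v·P : v ∈ W}, namely the span of the rows of [[1,0,1,2,2,0],[0,1,1,0,2,2]]. -/

import Mathlib

open Matrix

abbrev F3 := ZMod 3
abbrev V6 := Fin 6 → F3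

/-- The line (2-dim subspace) represented by a 2×6 matrix: the span of its rows. -/
def lineOf (A : Matrix (Fin 2) (Fin 6) F3) : Submodule F3 V6 :=
  Submodule.span F3 (Set.range A)

/-- The perp of a subspace `W` with respect to a 6×6 Gram matrix `M`:
`{x | xᵀ M w = 0 for all w ∈ W}`. -/
def perp (M : Matrix (Fin 6) (Fin 6) F3) (W : Submodule F3 V6) : Submodule F3 V6 where
  carrier := {x | ∀ w ∈ W, x ⬝ᵥ M.mulVec w = 0}
  add_mem' := by
    intro a b ha hb w hw
    simp only [Set.mem_setOf_eq] at *
    rw [add_dotProduct, ha w hw, hb w hw, add_zero]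
  zero_mem' := by
    intro w hw
    exact zero_dotProduct _
  smul_mem' := by
    intro c x hx w hw
    simp only [Set.mem_setOf_eq] at *
    rw [smul_dotProduct, hx w hw, smul_zero]

/-- A 2×6 matrix built from three 2×2 blocks. -/
def blk3 (A B C : Matrix (Fin 2) (Fin 2) F3) : Matrix (Fin 2) (Fin 6) F3 :=
  Matrix.of fun i j => ![A, B, C] ⟨(j : ℕ) / 2, by omega⟩ i ⟨(j : ℕ) % 2, by omega⟩

/-- A 6×6 matrix built from nine 2×2 blocks. -/
def blk33 (M : Matrix (Fin 3) (Fin 3) (Matrix (Fin 2) (Fin 2) F3)) :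
    Matrix (Fin 6) (Fin 6) F3 :=
  Matrix.of fun i j =>
    M ⟨(i : ℕ) / 2, by omega⟩ ⟨(j : ℕ) / 2, by omega⟩ ⟨(i : ℕ) % 2, by omega⟩ ⟨(j : ℕ) % 2, by omega⟩

/-- The 2×2 block of a 6×6 matrix in block-position `(i, j)`. -/
def blkAt (M : Matrix (Fin 6) (Fin 6) F3) (i j : Fin 3) : Matrix (Fin 2) (Fin 2) F3 :=
  Matrix.of fun a b => M ⟨2 * (i : ℕ) + (a : ℕ), by omega⟩ ⟨2 * (j : ℕ) + (b : ℕ), by omega⟩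

/-- Two (not necessarily distinct) lines are opposite w.r.t. `M` if `ℓ ∩ m^⊥ = 0`. -/
def Opp (M : Matrix (Fin 6) (Fin 6) F3) (ℓ m : Submodule F3 V6) : Prop :=
  ℓ ⊓ perp M m = ⊥

/-- The matrix `C`, with block form `[[O,O,C₀],[O,C₀,O],[C₀,O,O]]`, `C₀ = [[2,1],[0,1]]`. -/
def Cmat : Matrix (Fin 6) (Fin 6) F3 :=
  blk33 !![0, 0, !![2, 1; 0, 1]; 0, !![2, 1; 0, 1], 0; !![2, 1; 0, 1], 0, 0]

/-- The matrix `D`. -/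
def Dmat : Matrix (Fin 6) (Fin 6) F3 :=
  !![1, 1, 0, 0, 0, 0;
     1, 0, 0, 0, 0, 0;
     0, 0, 0, 0, 2, 2;
     0, 0, 0, 0, 0, 1;
     0, 1, 0, 1, 0, 1;
     1, 0, 1, 0, 1, 0]

def Pmat : Matrix (Fin 6) (Fin 6) F3 :=
  !![1, 2, 1, 2, 1, 2;
     1, 0, 1, 0, 1, 0;
     0, 0, 0, 0, 1, 2;
     0, 0, 0, 0, 0, 1;
     0, 2, 0, 0, 0, 0;
     1, 0, 0, 0, 0, 0]

def Q2mat : Matrix (Fin 6) (Fin 6) F3 :=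
  !![1, 0, 1, 1, 2, 2;
     2, 2, 2, 2, 0, 1;
     2, 2, 1, 0, 1, 2;
     1, 0, 0, 1, 0, 1;
     2, 2, 2, 0, 0, 0;
     2, 2, 1, 2, 1, 0]

def Nmat : Matrix (Fin 6) (Fin 6) F3 :=
  !![1, 0, 1, 2, 2, 0;
     2, 2, 1, 1, 2, 1;
     0, 1, 1, 0, 2, 2;
     1, 0, 1, 2, 2, 0;
     1, 1, 2, 2, 1, 2;
     1, 0, 1, 2, 2, 0]

def Amat : Matrix (Fin 2) (Fin 6) F3 := !![1, 0, 1, 2, 2, 0; 0, 1, 1, 0, 2, 2]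

def Smat0 : Matrix (Fin 6) (Fin 6) F3 :=
  !![0, 0, 0, 1, 0, 0;
     0, 0, 2, 2, 0, 0;
     1, 1, 1, 1, 1, 1;
     1, 2, 1, 2, 1, 2;
     2, 2, 2, 1, 1, 2;
     2, 1, 0, 2, 1, 0]

def Tmat0 : Matrix (Fin 6) (Fin 6) F3 :=
  !![0, 1, 2, 1, 2, 1;
     2, 1, 2, 0, 2, 0;
     0, 0, 1, 0, 2, 1;
     0, 0, 0, 1, 0, 2;
     0, 1, 0, 0, 1, 0;
     2, 0, 0, 0, 0, 1]

def Smat1 : Matrix (Fin 6) (Fin 6) F3 :=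
  !![0, 0, 0, 2, 0, 0;
     0, 0, 1, 1, 0, 0;
     2, 2, 2, 2, 2, 2;
     2, 1, 2, 1, 2, 1;
     1, 1, 1, 2, 2, 1;
     1, 2, 0, 1, 2, 0]

def Tmat1 : Matrix (Fin 6) (Fin 6) F3 :=
  !![0, 1, 2, 1, 2, 1;
     2, 1, 2, 0, 2, 0;
     0, 0, 1, 0, 2, 1;
     0, 0, 0, 1, 0, 2;
     0, 1, 0, 0, 1, 0;
     2, 0, 0, 0, 0, 1]

def Smat2 : Matrix (Fin 6) (Fin 6) F3 :=
  !![2, 0, 2, 1, 1, 1;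
     1, 1, 2, 2, 0, 2;
     0, 0, 1, 2, 1, 0;
     1, 1, 2, 0, 2, 0;
     2, 2, 2, 2, 2, 1;
     2, 0, 2, 2, 1, 0]

def Tmat2 : Matrix (Fin 6) (Fin 6) F3 :=
  !![1, 0, 0, 0, 0, 0;
     0, 1, 0, 0, 0, 0;
     0, 0, 1, 0, 0, 0;
     0, 0, 0, 1, 0, 0;
     0, 0, 0, 0, 1, 0;
     0, 0, 0, 0, 0, 1]

def Smat3 : Matrix (Fin 6) (Fin 6) F3 :=
  !![0, 2, 0, 1, 2, 0;
     2, 1, 2, 1, 1, 2;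
     1, 1, 2, 0, 0, 0;
     2, 0, 0, 2, 0, 0;
     1, 0, 1, 0, 0, 0;
     2, 1, 2, 1, 2, 0]

def Tmat3 : Matrix (Fin 6) (Fin 6) F3 :=
  !![1, 0, 0, 0, 0, 0;
     0, 1, 0, 0, 0, 0;
     0, 0, 1, 0, 0, 0;
     0, 0, 0, 1, 0, 0;
     0, 0, 0, 0, 1, 0;
     0, 0, 0, 0, 0, 1]

def Smat4 : Matrix (Fin 6) (Fin 6) F3 :=
  !![0, 1, 2, 2, 2, 1;
     2, 1, 1, 2, 2, 0;
     1, 1, 2, 1, 0, 2;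
     1, 2, 1, 0, 1, 1;
     2, 0, 2, 1, 2, 2;
     1, 1, 0, 2, 1, 1]

def Tmat4 : Matrix (Fin 6) (Fin 6) F3 :=
  !![2, 2, 1, 2, 1, 2;
     1, 1, 1, 0, 1, 0;
     0, 0, 1, 0, 1, 2;
     0, 0, 0, 1, 0, 1;
     0, 2, 0, 0, 1, 0;
     1, 0, 0, 0, 0, 1]

def Smat5 : Matrix (Fin 6) (Fin 6) F3 :=
  !![1, 0, 1, 2, 2, 2;
     2, 2, 1, 1, 0, 1;
     0, 0, 2, 1, 2, 0;
     2, 2, 1, 0, 1, 0;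
     1, 1, 1, 1, 1, 2;
     1, 0, 1, 1, 2, 0]

def Tmat5 : Matrix (Fin 6) (Fin 6) F3 :=
  !![1, 0, 0, 0, 0, 0;
     0, 1, 0, 0, 0, 0;
     0, 0, 1, 0, 0, 0;
     0, 0, 0, 1, 0, 0;
     0, 0, 0, 0, 1, 0;
     0, 0, 0, 0, 0, 1]

def Smat6 : Matrix (Fin 6) (Fin 6) F3 :=
  !![0, 2, 1, 1, 1, 2;
     1, 2, 2, 1, 1, 0;
     2, 2, 1, 2, 0, 1;
     2, 1, 2, 0, 2, 2;
     1, 0, 1, 2, 1, 1;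
     2, 2, 0, 1, 2, 2]

def Tmat6 : Matrix (Fin 6) (Fin 6) F3 :=
  !![2, 2, 1, 2, 1, 2;
     1, 1, 1, 0, 1, 0;
     0, 0, 1, 0, 1, 2;
     0, 0, 0, 1, 0, 1;
     0, 2, 0, 0, 1, 0;
     1, 0, 0, 0, 0, 1]

def Smat7 : Matrix (Fin 6) (Fin 6) F3 :=
  !![0, 1, 0, 2, 1, 0;
     1, 2, 1, 2, 2, 1;
     2, 2, 1, 0, 0, 0;
     1, 0, 0, 1, 0, 0;
     2, 0, 2, 0, 0, 0;
     1, 2, 1, 2, 1, 0]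

def Tmat7 : Matrix (Fin 6) (Fin 6) F3 :=
  !![1, 0, 0, 0, 0, 0;
     0, 1, 0, 0, 0, 0;
     0, 0, 1, 0, 0, 0;
     0, 0, 0, 1, 0, 0;
     0, 0, 0, 0, 1, 0;
     0, 0, 0, 0, 0, 1]

def Smat8 : Matrix (Fin 6) (Fin 6) F3 :=
  !![1, 0, 0, 0, 0, 0;
     0, 1, 0, 0, 0, 0;
     0, 0, 1, 0, 0, 0;
     0, 0, 0, 1, 0, 0;
     0, 0, 0, 0, 1, 0;
     0, 0, 0, 0, 0, 1]

def Tmat8 : Matrix (Fin 6) (Fin 6) F3 :=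
  !![0, 0, 0, 0, 0, 0;
     0, 0, 0, 0, 0, 0;
     0, 0, 0, 0, 0, 0;
     0, 0, 0, 0, 0, 0;
     0, 0, 0, 0, 0, 0;
     0, 0, 0, 0, 0, 0]

def Smat9 : Matrix (Fin 6) (Fin 6) F3 :=
  !![0, 0, 2, 2, 1, 1;
     1, 2, 1, 1, 0, 2;
     1, 1, 0, 0, 2, 1;
     2, 0, 0, 0, 0, 2;
     1, 1, 1, 0, 1, 0;
     1, 1, 2, 1, 2, 1]

def Tmat9 : Matrix (Fin 6) (Fin 6) F3 :=
  !![1, 0, 0, 0, 0, 0;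
     0, 1, 0, 0, 0, 0;
     0, 0, 1, 0, 0, 0;
     0, 0, 0, 1, 0, 0;
     0, 0, 0, 0, 1, 0;
     0, 0, 0, 0, 0, 1]

def Smat10 : Matrix (Fin 6) (Fin 6) F3 :=
  !![0, 1, 1, 2, 0, 2;
     0, 0, 1, 2, 2, 2;
     0, 0, 0, 2, 0, 1;
     1, 1, 2, 2, 2, 2;
     2, 0, 2, 2, 1, 1;
     1, 0, 2, 2, 1, 2]

def Tmat10 : Matrix (Fin 6) (Fin 6) F3 :=
  !![2, 1, 2, 1, 2, 1;
     2, 0, 2, 0, 2, 0;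
     0, 0, 0, 0, 2, 1;
     0, 0, 0, 0, 0, 2;
     0, 1, 0, 0, 0, 0;
     2, 0, 0, 0, 0, 0]

def Smat11 : Matrix (Fin 6) (Fin 6) F3 :=
  !![2, 1, 2, 0, 2, 1;
     2, 0, 0, 1, 2, 0;
     2, 2, 2, 2, 1, 0;
     2, 1, 2, 1, 2, 0;
     1, 2, 1, 2, 2, 1;
     0, 2, 0, 1, 2, 0]

def Tmat11 : Matrix (Fin 6) (Fin 6) F3 :=
  !![1, 0, 0, 0, 0, 0;
     0, 1, 0, 0, 0, 0;
     0, 0, 1, 0, 0, 0;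
     0, 0, 0, 1, 0, 0;
     0, 0, 0, 0, 1, 0;
     0, 0, 0, 0, 0, 1]

def Smat12 : Matrix (Fin 6) (Fin 6) F3 :=
  !![1, 0, 0, 1, 0, 0;
     0, 1, 2, 2, 0, 0;
     1, 1, 2, 1, 1, 1;
     1, 2, 1, 0, 1, 2;
     2, 2, 2, 1, 2, 2;
     2, 1, 0, 2, 1, 1]

def Tmat12 : Matrix (Fin 6) (Fin 6) F3 :=
  !![2, 1, 2, 1, 2, 1;
     2, 0, 2, 0, 2, 0;
     0, 0, 0, 0, 2, 1;
     0, 0, 0, 0, 0, 2;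
     0, 1, 0, 0, 0, 0;
     2, 0, 0, 0, 0, 0]

def Smat13 : Matrix (Fin 6) (Fin 6) F3 :=
  !![0, 1, 1, 1, 0, 2;
     0, 0, 2, 0, 2, 2;
     2, 2, 2, 1, 2, 0;
     0, 2, 1, 0, 1, 0;
     0, 1, 0, 1, 0, 2;
     2, 2, 2, 0, 0, 2]

def Tmat13 : Matrix (Fin 6) (Fin 6) F3 :=
  !![1, 2, 1, 2, 1, 2;
     1, 0, 1, 0, 1, 0;
     0, 0, 0, 0, 1, 2;
     0, 0, 0, 0, 0, 1;
     0, 2, 0, 0, 0, 0;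
     1, 0, 0, 0, 0, 0]

def Smat14 : Matrix (Fin 6) (Fin 6) F3 :=
  !![1, 1, 0, 1, 1, 0;
     1, 0, 2, 0, 2, 1;
     1, 1, 1, 2, 2, 2;
     0, 1, 2, 0, 2, 1;
     0, 1, 0, 2, 0, 1;
     2, 1, 1, 0, 0, 1]

def Tmat14 : Matrix (Fin 6) (Fin 6) F3 :=
  !![2, 0, 0, 0, 0, 0;
     0, 2, 0, 0, 0, 0;
     0, 0, 2, 0, 0, 0;
     0, 0, 0, 2, 0, 0;
     0, 0, 0, 0, 2, 0;
     0, 0, 0, 0, 0, 2]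

def Smat15 : Matrix (Fin 6) (Fin 6) F3 :=
  !![1, 0, 2, 0, 1, 1;
     1, 0, 0, 0, 0, 2;
     2, 2, 2, 1, 0, 2;
     0, 2, 1, 0, 1, 1;
     0, 0, 0, 1, 0, 2;
     0, 2, 2, 0, 0, 2]

def Tmat15 : Matrix (Fin 6) (Fin 6) F3 :=
  !![2, 1, 2, 1, 2, 1;
     2, 0, 2, 0, 2, 0;
     0, 0, 0, 0, 2, 1;
     0, 0, 0, 0, 0, 2;
     0, 1, 0, 0, 0, 0;
     2, 0, 0, 0, 0, 0]

def Smat16 : Matrix (Fin 6) (Fin 6) F3 :=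
  !![1, 1, 1, 2, 0, 2;
     0, 1, 1, 2, 2, 2;
     0, 0, 1, 2, 0, 1;
     1, 1, 2, 0, 2, 2;
     2, 0, 2, 2, 2, 1;
     1, 0, 2, 2, 1, 0]

def Tmat16 : Matrix (Fin 6) (Fin 6) F3 :=
  !![1, 1, 2, 1, 2, 1;
     2, 2, 2, 0, 2, 0;
     0, 0, 2, 0, 2, 1;
     0, 0, 0, 2, 0, 2;
     0, 1, 0, 0, 2, 0;
     2, 0, 0, 0, 0, 2]

def Smat17 : Matrix (Fin 6) (Fin 6) F3 :=
  !![2, 0, 0, 0, 0, 0;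
     0, 2, 0, 0, 0, 0;
     0, 0, 2, 0, 0, 0;
     0, 0, 0, 2, 0, 0;
     0, 0, 0, 0, 2, 0;
     0, 0, 0, 0, 0, 2]

def Tmat17 : Matrix (Fin 6) (Fin 6) F3 :=
  !![0, 0, 0, 0, 0, 0;
     0, 0, 0, 0, 0, 0;
     0, 0, 0, 0, 0, 0;
     0, 0, 0, 0, 0, 0;
     0, 0, 0, 0, 0, 0;
     0, 0, 0, 0, 0, 0]

def Smat18 : Matrix (Fin 6) (Fin 6) F3 :=
  !![0, 2, 2, 1, 0, 1;
     0, 0, 2, 1, 1, 1;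
     0, 0, 0, 1, 0, 2;
     2, 2, 1, 1, 1, 1;
     1, 0, 1, 1, 2, 2;
     2, 0, 1, 1, 2, 1]

def Tmat18 : Matrix (Fin 6) (Fin 6) F3 :=
  !![2, 1, 2, 1, 2, 1;
     2, 0, 2, 0, 2, 0;
     0, 0, 0, 0, 2, 1;
     0, 0, 0, 0, 0, 2;
     0, 1, 0, 0, 0, 0;
     2, 0, 0, 0, 0, 0]

def Smat19 : Matrix (Fin 6) (Fin 6) F3 :=
  !![0, 0, 1, 1, 2, 2;
     2, 1, 2, 2, 0, 1;
     2, 2, 0, 0, 1, 2;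
     1, 0, 0, 0, 0, 1;
     2, 2, 2, 0, 2, 0;
     2, 2, 1, 2, 1, 2]

def Tmat19 : Matrix (Fin 6) (Fin 6) F3 :=
  !![1, 0, 0, 0, 0, 0;
     0, 1, 0, 0, 0, 0;
     0, 0, 1, 0, 0, 0;
     0, 0, 0, 1, 0, 0;
     0, 0, 0, 0, 1, 0;
     0, 0, 0, 0, 0, 1]

def Smat20 : Matrix (Fin 6) (Fin 6) F3 :=
  !![2, 2, 0, 2, 2, 0;
     2, 0, 1, 0, 1, 2;
     2, 2, 2, 1, 1, 1;
     0, 2, 1, 0, 1, 2;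
     0, 2, 0, 1, 0, 2;
     1, 2, 2, 0, 0, 2]

def Tmat20 : Matrix (Fin 6) (Fin 6) F3 :=
  !![2, 0, 0, 0, 0, 0;
     0, 2, 0, 0, 0, 0;
     0, 0, 2, 0, 0, 0;
     0, 0, 0, 2, 0, 0;
     0, 0, 0, 0, 2, 0;
     0, 0, 0, 0, 0, 2]

def Smat21 : Matrix (Fin 6) (Fin 6) F3 :=
  !![2, 2, 2, 1, 0, 1;
     0, 2, 2, 1, 1, 1;
     0, 0, 2, 1, 0, 2;
     2, 2, 1, 0, 1, 1;
     1, 0, 1, 1, 1, 2;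
     2, 0, 1, 1, 2, 0]

def Tmat21 : Matrix (Fin 6) (Fin 6) F3 :=
  !![1, 1, 2, 1, 2, 1;
     2, 2, 2, 0, 2, 0;
     0, 0, 2, 0, 2, 1;
     0, 0, 0, 2, 0, 2;
     0, 1, 0, 0, 2, 0;
     2, 0, 0, 0, 0, 2]

def Smat22 : Matrix (Fin 6) (Fin 6) F3 :=
  !![2, 0, 1, 0, 2, 2;
     2, 0, 0, 0, 0, 1;
     1, 1, 1, 2, 0, 1;
     0, 1, 2, 0, 2, 2;
     0, 0, 0, 2, 0, 1;
     0, 1, 1, 0, 0, 1]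

def Tmat22 : Matrix (Fin 6) (Fin 6) F3 :=
  !![2, 1, 2, 1, 2, 1;
     2, 0, 2, 0, 2, 0;
     0, 0, 0, 0, 2, 1;
     0, 0, 0, 0, 0, 2;
     0, 1, 0, 0, 0, 0;
     2, 0, 0, 0, 0, 0]

def Smat23 : Matrix (Fin 6) (Fin 6) F3 :=
  !![1, 2, 1, 0, 1, 2;
     1, 0, 0, 2, 1, 0;
     1, 1, 1, 1, 2, 0;
     1, 2, 1, 2, 1, 0;
     2, 1, 2, 1, 1, 2;
     0, 1, 0, 2, 1, 0]

def Tmat23 : Matrix (Fin 6) (Fin 6) F3 :=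
  !![1, 0, 0, 0, 0, 0;
     0, 1, 0, 0, 0, 0;
     0, 0, 1, 0, 0, 0;
     0, 0, 0, 1, 0, 0;
     0, 0, 0, 0, 1, 0;
     0, 0, 0, 0, 0, 1]

def Smat24 : Matrix (Fin 6) (Fin 6) F3 :=
  !![0, 2, 2, 2, 0, 1;
     0, 0, 1, 0, 1, 1;
     1, 1, 1, 2, 1, 0;
     0, 1, 2, 0, 2, 0;
     0, 2, 0, 2, 0, 1;
     1, 1, 1, 0, 0, 1]

def Tmat24 : Matrix (Fin 6) (Fin 6) F3 :=
  !![1, 2, 1, 2, 1, 2;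
     1, 0, 1, 0, 1, 0;
     0, 0, 0, 0, 1, 2;
     0, 0, 0, 0, 0, 1;
     0, 2, 0, 0, 0, 0;
     1, 0, 0, 0, 0, 0]

def Smat25 : Matrix (Fin 6) (Fin 6) F3 :=
  !![2, 0, 0, 2, 0, 0;
     0, 2, 1, 1, 0, 0;
     2, 2, 1, 2, 2, 2;
     2, 1, 2, 0, 2, 1;
     1, 1, 1, 2, 1, 1;
     1, 2, 0, 1, 2, 2]

def Tmat25 : Matrix (Fin 6) (Fin 6) F3 :=
  !![2, 1, 2, 1, 2, 1;
     2, 0, 2, 0, 2, 0;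
     0, 0, 0, 0, 2, 1;
     0, 0, 0, 0, 0, 2;
     0, 1, 0, 0, 0, 0;
     2, 0, 0, 0, 0, 0]

lemma cons_val_five {α : Type*} {m : ℕ} (x : α) (u : Fin (m+5) → α) :
    Matrix.vecCons x u 5 = Matrix.vecHead (Matrix.vecTail (Matrix.vecTail (Matrix.vecTail (Matrix.vecTail u)))) :=
  rfl

lemma vecMul_smulmat (a : F3) (M : Matrix (Fin 6) (Fin 6) F3) (v : V6) :
    v ᵥ* (a • M) = a • (v ᵥ* M) := by
  funext j
  simp [Matrix.vecMul, dotProduct, Finset.mul_sum, mul_left_comm]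

lemma cancelKey (a b c : F3) (S T : Matrix (Fin 6) (Fin 6) F3)
    (hid : (a • (1 : Matrix (Fin 6) (Fin 6) F3) + b • Pmat + c • (Pmat * Pmat)) * S + Nmat * T = 1)
    (w : V6) (hN : w ᵥ* Nmat = 0)
    (h : a • w + b • (w ᵥ* Pmat) + c • ((w ᵥ* Pmat) ᵥ* Pmat) = 0) : w = 0 := by
  have hM : w ᵥ* (a • (1 : Matrix (Fin 6) (Fin 6) F3) + b • Pmat + c • (Pmat * Pmat)) = 0 := by
    rw [vecMul_add, vecMul_add, vecMul_smulmat, vecMul_smulmat, vecMul_smulmat, vecMul_one,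
      ← vecMul_vecMul]
    exact h
  have h1 : w ᵥ* ((a • (1 : Matrix (Fin 6) (Fin 6) F3) + b • Pmat + c • (Pmat * Pmat)) * S
      + Nmat * T) = w := by rw [hid, vecMul_one]
  rw [vecMul_add, ← vecMul_vecMul, ← vecMul_vecMul, hM, hN, Matrix.zero_vecMul,
    Matrix.zero_vecMul, add_zero] at h1
  exact h1.symm

lemma bigkey (w : V6) (hN : w ᵥ* Nmat = 0) (a b c : F3)
    (hne : ¬(a = 0 ∧ b = 0 ∧ c = 0))
    (h : a • w + b • (w ᵥ* Pmat) + c • ((w ᵥ* Pmat) ᵥ* Pmat) = 0) : w = 0 := by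
  fin_cases a <;> fin_cases b <;> fin_cases c
  · exact absurd ⟨rfl, rfl, rfl⟩ hne
  · exact cancelKey _ _ _ Smat0 Tmat0 (by decide) w hN h
  · exact cancelKey _ _ _ Smat1 Tmat1 (by decide) w hN h
  · exact cancelKey _ _ _ Smat2 Tmat2 (by decide) w hN h
  · exact cancelKey _ _ _ Smat3 Tmat3 (by decide) w hN h
  · exact cancelKey _ _ _ Smat4 Tmat4 (by decide) w hN h
  · exact cancelKey _ _ _ Smat5 Tmat5 (by decide) w hN h
  · exact cancelKey _ _ _ Smat6 Tmat6 (by decide) w hN h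
  · exact cancelKey _ _ _ Smat7 Tmat7 (by decide) w hN h
  · exact cancelKey _ _ _ Smat8 Tmat8 (by decide) w hN h
  · exact cancelKey _ _ _ Smat9 Tmat9 (by decide) w hN h
  · exact cancelKey _ _ _ Smat10 Tmat10 (by decide) w hN h
  · exact cancelKey _ _ _ Smat11 Tmat11 (by decide) w hN h
  · exact cancelKey _ _ _ Smat12 Tmat12 (by decide) w hN h
  · exact cancelKey _ _ _ Smat13 Tmat13 (by decide) w hN h
  · exact cancelKey _ _ _ Smat14 Tmat14 (by decide) w hN h
  · exact cancelKey _ _ _ Smat15 Tmat15 (by decide) w hN h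
  · exact cancelKey _ _ _ Smat16 Tmat16 (by decide) w hN h
  · exact cancelKey _ _ _ Smat17 Tmat17 (by decide) w hN h
  · exact cancelKey _ _ _ Smat18 Tmat18 (by decide) w hN h
  · exact cancelKey _ _ _ Smat19 Tmat19 (by decide) w hN h
  · exact cancelKey _ _ _ Smat20 Tmat20 (by decide) w hN h
  · exact cancelKey _ _ _ Smat21 Tmat21 (by decide) w hN h
  · exact cancelKey _ _ _ Smat22 Tmat22 (by decide) w hN h
  · exact cancelKey _ _ _ Smat23 Tmat23 (by decide) w hN h
  · exact cancelKey _ _ _ Smat24 Tmat24 (by decide) w hN h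
  · exact cancelKey _ _ _ Smat25 Tmat25 (by decide) w hN h

lemma liA : LinearIndependent F3 (fun i => (Amat i : V6)) := by
  rw [Fintype.linearIndependent_iff]
  decide

lemma finrankL : Module.finrank F3 (lineOf Amat) = 2 := by
  have h := finrank_span_eq_card (R := F3) liA
  simp [lineOf] at h; exact h

lemma mapL : (lineOf Amat).map Pmat.vecMulLinear = lineOf Amat := by
  show Submodule.map _ (Submodule.span F3 (Set.range fun i => (Amat i : V6))) = _
  rw [Submodule.map_span]
  rw [← Set.range_comp]
  have : (Pmat.vecMulLinear ∘ fun i => (Amat i : V6)) = fun i => (Amat i : V6) := by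
    funext i
    simp only [Function.comp_apply, Matrix.vecMulLinear_apply]
    fin_cases i <;> decide
  rw [this]
  rfl

lemma hCD : Cmat * Dmat = Pmat := by decide

lemma Q2N : Q2mat * Nmat = 0 := by decide

lemma Q2eq : Q2mat = Pmat * Pmat + Pmat + 1 := by decide

/-- The matrix `P = C·D` leaves invariant exactly one 2-dimensional
subspace of `GF(3)^6` under the row action, namely the row space of
`[[1,0,1,2,2,0],[0,1,1,0,2,2]]`. -/
theorem stmt12 :
    ∀ W : Submodule F3 V6,
      (Module.finrank F3 W = 2 ∧ W.map (Cmat * Dmat).vecMulLinear = W) ↔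
        W = lineOf !![1, 0, 1, 2, 2, 0; 0, 1, 1, 0, 2, 2] := by
  intro W
  constructor
  · rintro ⟨hrank, hmap⟩
    rw [hCD] at hmap
    have hstep : ∀ v ∈ W, v ᵥ* Pmat ∈ W := by
      intro v hv
      rw [← hmap]
      exact ⟨v, hv, by simp [Matrix.vecMulLinear_apply]⟩
    have hker : ∀ v ∈ W, v ᵥ* Q2mat = 0 := by
      intro v hv
      have hvP : v ᵥ* Pmat ∈ W := hstep v hv
      set w := v ᵥ* Q2mat with hw
      have hwW : w ∈ W := by
        rw [hw, Q2eq, vecMul_add, vecMul_add, vecMul_one, ← vecMul_vecMul]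
        exact W.add_mem (W.add_mem (hstep _ hvP) hvP) hv
      have hwN : w ᵥ* Nmat = 0 := by
        rw [hw, vecMul_vecMul, Q2N, Matrix.vecMul_zero]
      have hw1 : w ᵥ* Pmat ∈ W := hstep _ hwW
      have hw2 : (w ᵥ* Pmat) ᵥ* Pmat ∈ W := hstep _ hw1
      have hdep : ¬ LinearIndependent F3
          ![(⟨w, hwW⟩ : W), ⟨w ᵥ* Pmat, hw1⟩, ⟨(w ᵥ* Pmat) ᵥ* Pmat, hw2⟩] := by
        intro hli
        have h3 := hli.fintype_card_le_finrank
        rw [hrank] at h3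
        simp at h3
      rw [Fintype.not_linearIndependent_iff] at hdep
      obtain ⟨g, hsum, i, hgi⟩ := hdep
      have hcombo : g 0 • w + g 1 • (w ᵥ* Pmat) + g 2 • ((w ᵥ* Pmat) ᵥ* Pmat) = 0 := by
        have h4 := congrArg (Subtype.val) hsum
        simpa [Fin.sum_univ_three] using h4
      have hne : ¬(g 0 = 0 ∧ g 1 = 0 ∧ g 2 = 0) := by
        rintro ⟨h0, h1, h2⟩
        fin_cases i <;> simp_all
      exact bigkey w hwN (g 0) (g 1) (g 2) hne hcombo
    show W = lineOf Amat
    have hle : W ≤ lineOf Amat := by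
      intro v hv
      have hQ := hker v hv
      have h0 := congrFun hQ 0
      have h1 := congrFun hQ 1
      have h2 := congrFun hQ 2
      have h3 := congrFun hQ 3
      simp [Matrix.vecMul, dotProduct, Fin.sum_univ_six, Q2mat, cons_val_five, Matrix.vecHead, Matrix.vecTail] at h0 h1 h2 h3
      have htriv : (3 : F3) = 0 := rfl
      have e2 : v 2 = v 0 + v 1 := by
        linear_combination 2*h0 + 2*h1 + 2*h2 + h3 +
          ((-2)*v 0+(-5)*v 1+(-3)*v 2+(-1)*v 3+(-4)*v 4+(-4)*v 5) * htriv
      have e3 : v 3 = 2 * v 0 := by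
        linear_combination h0 + 2*h1 +
          ((-1)*v 0+(-2)*v 1+(-2)*v 2+(-2)*v 4+(-2)*v 5) * htriv
      have e4 : v 4 = 2 * v 0 + 2 * v 1 := by
        linear_combination h1 + h2 +
          ((-1)*v 0+(-2)*v 1+(-1)*v 2+(-1)*v 4+(-1)*v 5) * htriv
      have e5 : v 5 = 2 * v 1 := by
        linear_combination h0 + 2*h1 + 2*h3 +
          ((-1)*v 0+(-4)*v 1+(-2)*v 2+(-1)*v 3+(-2)*v 4+(-3)*v 5) * htriv
      have hv' : v = v 0 • (Amat 0 : V6) + v 1 • (Amat 1 : V6) := by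
        funext j
        fin_cases j
        · simp [Amat, cons_val_five, Matrix.vecHead, Matrix.vecTail]
        · simp [Amat, cons_val_five, Matrix.vecHead, Matrix.vecTail]
        · simp [Amat, cons_val_five, Matrix.vecHead, Matrix.vecTail]; linear_combination e2
        · simp [Amat, cons_val_five, Matrix.vecHead, Matrix.vecTail]; linear_combination e3
        · simp [Amat, cons_val_five, Matrix.vecHead, Matrix.vecTail]; linear_combination e4
        · simp [Amat, cons_val_five, Matrix.vecHead, Matrix.vecTail]; linear_combination e5
      rw [hv']
      exact Submodule.add_mem _
        (Submodule.smul_mem _ _ (Submodule.subset_span ⟨0, rfl⟩))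
        (Submodule.smul_mem _ _ (Submodule.subset_span ⟨1, rfl⟩))
    exact Submodule.eq_of_le_of_finrank_le hle (by rw [hrank, finrankL])
  · rintro rfl
    refine ⟨finrankL, ?_⟩
    rw [hCD]
    exact mapL
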